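/- arXiv:1203.4075 — 2 statements merged into one kernel-verified Lean document; each statement's English description precedes it below -/
import Mathlib

section
/- Let K be a convex body in ℝⁿ and T a convex body that tiles ℝⁿ by translations along a sublattice Λ of ℤⁿ (i.e. Λ + T = ℝⁿ and the translates x + int T for x ∈ Λ are pairwise disjoint). Then #(K ∩ ℤⁿ) ≤ vol(K + T), where K + T is the Minkowski sum. -/
open MeasureTheory Set Pointwise
open scoped ENNReal

noncomputable section

/-- The integer lattice ℤⁿ inside ℝⁿ. -/
def latt (n : ℕ) : Set (Fin n → ℝ) := {x | ∀ i, ∃ m : ℤ, x i = (m : ℝ)}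

lemma latt_sub {n : ℕ} {a b : Fin n → ℝ} (ha : a ∈ latt n) (hb : b ∈ latt n) :
    a - b ∈ latt n := fun i => by
  obtain ⟨p, hp⟩ := ha i
  obtain ⟨q, hq⟩ := hb i
  exact ⟨p - q, by simp [hp, hq]⟩

lemma latt_eq_zero_of_abs_lt {n : ℕ} {w : Fin n → ℝ} (hw : w ∈ latt n)
    (h : ∀ i, |w i| < 1) : w = 0 := by
  funext i
  obtain ⟨p, hp⟩ := hw i
  have h2 : |(p : ℝ)| < 1 := by rw [← hp]; exact h i
  have h3 : ((|p| : ℤ) : ℝ) < 1 := by rwa [Int.cast_abs]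
  have h4 : |p| < 1 := by exact_mod_cast h3
  have : p = 0 := by
    rcases abs_lt.mp h4 with ⟨hl, hr⟩
    omega
  simp [hp, this]

/-- The half-open unit cube `[0,1)ⁿ`. -/
def ucube (n : ℕ) : Set (Fin n → ℝ) := Set.pi Set.univ fun _ => Set.Ico (0:ℝ) 1

lemma ucube_measurable (n : ℕ) : MeasurableSet (ucube n) :=
  MeasurableSet.univ_pi fun _ => measurableSet_Ico

lemma ucube_volume (n : ℕ) : volume (ucube n) = 1 := by
  rw [ucube, volume_pi_pi]; simp

lemma measurableSet_vadd' {n : ℕ} {s : Set (Fin n → ℝ)} (hs : MeasurableSet s)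
    (a : Fin n → ℝ) : MeasurableSet (a +ᵥ s) := by
  have : a +ᵥ s = (fun x => -a + x) ⁻¹' s := by
    ext x
    rw [Set.mem_vadd_set_iff_neg_vadd_mem]
    rfl
  rw [this]
  exact hs.preimage (measurable_const_add _)

lemma cube_vadd_disjoint {n : ℕ} {a b : Fin n → ℝ} (hab' : a - b ∈ latt n) (hab : a ≠ b) :
    Disjoint (a +ᵥ ucube n) (b +ᵥ ucube n) := by
  rw [Set.disjoint_left]
  rintro p hpa hpb
  rw [Set.mem_vadd_set_iff_neg_vadd_mem] at hpa hpb
  apply hab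
  have hz : a - b = 0 := by
    apply latt_eq_zero_of_abs_lt hab'
    intro i
    have h1 := hpa i (Set.mem_univ i)
    have h2 := hpb i (Set.mem_univ i)
    simp only [Set.mem_Ico] at h1 h2
    have e1 : (-a +ᵥ p) i = -a i + p i := rfl
    have e2 : (-b +ᵥ p) i = -b i + p i := rfl
    rw [e1] at h1; rw [e2] at h2
    have : (a - b) i = a i - b i := rfl
    rw [this, abs_lt]
    constructor <;> linarith
  have := sub_eq_zero.mp hz
  exact this

/-- Lattice tiles give an upper bound on the number of lattice points:
`#(K ∩ ℤⁿ) ≤ vol(K + T)`. -/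
theorem card_le_vol_add_tile (n : ℕ) (K T : Set (Fin n → ℝ))
    (hK_cpt : IsCompact K) (hK_conv : Convex ℝ K) (hK_int : (interior K).Nonempty)
    (hT_cpt : IsCompact T) (hT_conv : Convex ℝ T) (hT_int : (interior T).Nonempty)
    (Λ : AddSubgroup (Fin n → ℝ))
    (hΛ_sub : (Λ : Set (Fin n → ℝ)) ⊆ latt n)
    (hΛ_rank : Submodule.span ℝ (Λ : Set (Fin n → ℝ)) = ⊤)
    (h_cover : (⋃ x ∈ Λ, x +ᵥ T) = Set.univ)
    (h_pack : ∀ x ∈ Λ, ∀ y ∈ Λ, x ≠ y → (x +ᵥ interior T) ∩ (y +ᵥ interior T) = ∅) :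
    ((K ∩ latt n).ncard : ℝ) ≤ (volume (K + T)).toReal := by
  classical
  -- countability of Λ
  have hlatt_count : (latt n).Countable := by
    have hsub : latt n ⊆ Set.range (fun v : Fin n → ℤ => fun i => (v i : ℝ)) := by
      intro x hx
      exact ⟨fun i => (hx i).choose, funext fun i => ((hx i).choose_spec).symm⟩
    exact (Set.countable_range _).mono hsub
  have hΛ_count : (Λ : Set (Fin n → ℝ)).Countable := hlatt_count.mono hΛ_sub
  haveI : Countable ↥Λ := hΛ_count.to_subtype
  -- basic measure facts about T
  have hT_meas : MeasurableSet T := hT_cpt.isClosed.measurableSet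
  have hTfr : volume (frontier T) = 0 := hT_conv.addHaar_frontier volume
  have hT_int_vol : volume (interior T) = volume T := by
    refine le_antisymm (measure_mono interior_subset) ?_
    calc volume T ≤ volume (interior T ∪ frontier T) := by
          apply measure_mono
          intro x hx
          rcases Classical.em (x ∈ interior T) with h | h
          · exact Or.inl h
          · exact Or.inr ⟨subset_closure hx, h⟩
      _ ≤ volume (interior T) + volume (frontier T) := measure_union_le _ _
      _ = volume (interior T) := by rw [hTfr, add_zero]
  have hT_pos : volume T ≠ 0 := by
    rw [← hT_int_vol]
    exact (isOpen_interior.measure_pos volume hT_int).ne'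
  have hT_fin : volume T ≠ ⊤ := hT_cpt.measure_lt_top.ne
  -- finiteness of K ∩ ℤⁿ
  have hS : (K ∩ latt n).Finite := by
    obtain ⟨R, hR⟩ := hK_cpt.isBounded.subset_closedBall 0
    apply Set.Finite.subset (Set.Finite.image (f := fun v : Fin n → ℤ => fun i => (v i : ℝ))
      (Set.Finite.pi fun _ : Fin n => Set.finite_Icc (-⌈R⌉) ⌈R⌉))
    rintro x ⟨hxK, hxl⟩
    refine ⟨fun i => (hxl i).choose, ?_, funext fun i => ((hxl i).choose_spec).symm⟩
    intro i _
    have hnx : ‖x‖ ≤ R := by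
      have := hR hxK
      rwa [Metric.mem_closedBall, dist_zero_right] at this
    have hxi : |x i| ≤ R := le_trans (norm_le_pi_norm x i) hnx
    have hspec := (hxl i).choose_spec
    rw [hspec] at hxi
    rw [Set.mem_Icc]
    constructor
    · have : -R ≤ ((hxl i).choose : ℝ) := by
        have := abs_le.mp hxi
        linarith [this.1]
      have hR' : (-(⌈R⌉:ℤ) : ℝ) ≤ ((hxl i).choose : ℝ) := by
        push_cast
        calc (-(⌈R⌉:ℤ) : ℝ) ≤ -R := by
              have := Int.le_ceil R; push_cast; linarith
          _ ≤ _ := this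
      exact_mod_cast hR'
    · have h1 : ((hxl i).choose : ℝ) ≤ R := (abs_le.mp hxi).2
      have h2 : ((hxl i).choose : ℝ) ≤ (⌈R⌉ : ℝ) := le_trans h1 (Int.le_ceil R)
      exact_mod_cast h2
  set F : Finset (Fin n → ℝ) := hS.toFinset with hF_def
  have hF_mem : ∀ z ∈ F, z ∈ K ∧ z ∈ latt n := by
    intro z hz
    rw [hF_def, Set.Finite.mem_toFinset] at hz
    exact hz
  -- the quotient map
  set q : (Fin n → ℝ) → (Fin n → ℝ) ⧸ Λ := QuotientAddGroup.mk with hq_def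
  have hq_iff : ∀ z w : Fin n → ℝ, q z = q w ↔ z - w ∈ Λ := by
    intro z w
    rw [hq_def]
    constructor
    · intro h
      have := QuotientAddGroup.eq.mp h
      have h2 : -(-z + w) ∈ Λ := neg_mem this
      convert h2 using 1
      abel
    · intro h
      apply QuotientAddGroup.eq.mpr
      have h2 : -(z - w) ∈ Λ := neg_mem h
      convert h2 using 1
      abel
  -- Claim A: per-coset bound
  have claimA : ∀ c ∈ F.image q,
      ((F.filter (fun z => q z = c)).card : ℝ≥0∞) * volume T ≤ volume (K + T) := by
    intro c _
    set Fc := F.filter (fun z => q z = c) with hFc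
    have hdisj : Set.PairwiseDisjoint (↑Fc : Set (Fin n → ℝ))
        (fun z => (z +ᵥ interior T : Set (Fin n → ℝ))) := by
      intro z hz w hw hzw
      rw [Finset.coe_filter, Set.mem_setOf_eq] at hz hw
      have hzw' : z - w ∈ Λ := (hq_iff z w).mp (hz.2.trans hw.2.symm)
      have hpack := h_pack (z - w) hzw' 0 (zero_mem Λ) (sub_ne_zero.mpr hzw)
      rw [Function.onFun, Set.disjoint_left]
      rintro p hp1 hp2
      rw [Set.mem_vadd_set_iff_neg_vadd_mem] at hp1 hp2
      have hm1 : -w +ᵥ p ∈ (z - w) +ᵥ interior T := by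
        rw [Set.mem_vadd_set_iff_neg_vadd_mem]
        have heq : -(z - w) +ᵥ (-w +ᵥ p) = -z +ᵥ p := by
          funext i
          show (-(z - w) + (-w + p)) i = (-z + p) i
          simp only [Pi.add_apply, Pi.neg_apply, Pi.sub_apply]
          ring
        rw [heq]
        exact hp1
      have hm2 : -w +ᵥ p ∈ (0 : Fin n → ℝ) +ᵥ interior T := by
        rw [zero_vadd]; exact hp2
      have : -w +ᵥ p ∈ ((z - w) +ᵥ interior T) ∩ ((0:Fin n → ℝ) +ᵥ interior T) := ⟨hm1, hm2⟩
      rw [hpack] at this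
      exact this
    have hmeas : ∀ z ∈ Fc, MeasurableSet (z +ᵥ interior T) := fun z _ =>
      measurableSet_vadd' isOpen_interior.measurableSet z
    have hsum := measure_biUnion_finset (μ := volume) hdisj hmeas
    have hvol : ∀ z ∈ Fc, volume (z +ᵥ interior T) = volume T := by
      intro z _
      rw [measure_vadd (G := Fin n → ℝ) (μ := volume) z (interior T), hT_int_vol]
    rw [Finset.sum_congr rfl hvol, Finset.sum_const, nsmul_eq_mul] at hsum
    rw [← hsum]
    apply measure_mono
    intro p hp
    simp only [Set.mem_iUnion] at hp
    obtain ⟨z, hz, hp⟩ := hp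
    rw [Set.mem_vadd_set_iff_neg_vadd_mem] at hp
    have hzF : z ∈ F := Finset.mem_of_mem_filter z hz
    refine ⟨z, (hF_mem z hzF).1, -z +ᵥ p, interior_subset hp, ?_⟩
    funext i
    show z i + (-z + p) i = p i
    simp only [Pi.add_apply, Pi.neg_apply]
    ring
  -- Claim B: number of cosets ≤ vol T
  have claimB : ((F.image q).card : ℝ≥0∞) ≤ volume T := by
    set rep : ((Fin n → ℝ) ⧸ Λ) → (Fin n → ℝ) := fun c =>
      if h : ∃ z ∈ F, q z = c then h.choose else 0 with hrep_def
    have hrep : ∀ c ∈ F.image q, rep c ∈ F ∧ q (rep c) = c := by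
      intro c hc
      rw [Finset.mem_image] at hc
      obtain ⟨z, hz, hqz⟩ := hc
      have h : ∃ z ∈ F, q z = c := ⟨z, hz, hqz⟩
      rw [hrep_def]
      simp only [dif_pos h]
      exact ⟨h.choose_spec.1, h.choose_spec.2⟩
    set U := ⋃ c ∈ F.image q, rep c +ᵥ ucube n with hU_def
    have hU_meas : MeasurableSet U := by
      rw [hU_def]
      apply Finset.measurableSet_biUnion
      intro c _
      exact measurableSet_vadd' (ucube_measurable n) _
    have hrep_latt : ∀ c ∈ F.image q, rep c ∈ latt n := fun c hc =>
      (hF_mem _ (hrep c hc).1).2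
    have hU_vol : volume U = ((F.image q).card : ℝ≥0∞) := by
      rw [hU_def]
      have hdisj : Set.PairwiseDisjoint (↑(F.image q)) (fun c => rep c +ᵥ ucube n) := by
        intro c hc c' hc' hcc'
        rw [Finset.mem_coe] at hc hc'
        apply cube_vadd_disjoint (latt_sub (hrep_latt c hc) (hrep_latt c' hc'))
        intro heq
        apply hcc'
        rw [← (hrep c hc).2, ← (hrep c' hc').2, heq]
      rw [measure_biUnion_finset hdisj
        (fun c _ => measurableSet_vadd' (ucube_measurable n) _)]
      have : ∀ c ∈ F.image q, volume (rep c +ᵥ ucube n) = 1 := by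
        intro c _
        rw [measure_vadd (G := Fin n → ℝ) (μ := volume) _ (ucube n), ucube_volume]
      rw [Finset.sum_congr rfl this, Finset.sum_const, nsmul_eq_mul, mul_one]
    -- U is covered by Λ-translates of T
    have hcov : U ⊆ ⋃ (l : Λ), ((l : Fin n → ℝ) +ᵥ T) := by
      intro x _
      have hx : x ∈ ⋃ y ∈ Λ, y +ᵥ T := by rw [h_cover]; exact Set.mem_univ x
      simp only [Set.mem_iUnion] at hx ⊢
      obtain ⟨y, hy, hxy⟩ := hx
      exact ⟨⟨y, hy⟩, hxy⟩
    have h1 : volume U ≤ ∑' (l : Λ), volume (U ∩ ((l : Fin n → ℝ) +ᵥ T)) := by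
      have hsub : U ⊆ ⋃ (l : Λ), U ∩ ((l : Fin n → ℝ) +ᵥ T) := by
        intro x hx
        obtain ⟨l, hl⟩ := Set.mem_iUnion.mp (hcov hx)
        exact Set.mem_iUnion.mpr ⟨l, hx, hl⟩
      exact (measure_mono hsub).trans (measure_iUnion_le _)
    have h2 : ∀ l : Λ, volume (U ∩ ((l : Fin n → ℝ) +ᵥ T))
        = volume ((-(l : Fin n → ℝ) +ᵥ U) ∩ T) := by
      intro l
      have heq : U ∩ ((l : Fin n → ℝ) +ᵥ T)
          = (l : Fin n → ℝ) +ᵥ ((-(l : Fin n → ℝ) +ᵥ U) ∩ T) := by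
        ext x
        simp only [Set.mem_inter_iff, Set.mem_vadd_set_iff_neg_vadd_mem, neg_neg,
          vadd_eq_add, add_neg_cancel_left]
      rw [heq, measure_vadd (G := Fin n → ℝ) (μ := volume)]
    -- the translated copies of U are pairwise disjoint
    have hg_disj : Pairwise (Function.onFun Disjoint
        (fun l : Λ => (-(l : Fin n → ℝ) +ᵥ U) ∩ T)) := by
      intro l l' hll'
      rw [Function.onFun, Set.disjoint_left]
      rintro x ⟨hx1, _⟩ ⟨hx2, _⟩
      rw [Set.mem_vadd_set_iff_neg_vadd_mem, neg_neg] at hx1 hx2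
      -- hx1 : l + x ∈ U, hx2 : l' + x ∈ U
      rw [hU_def] at hx1 hx2
      simp only [Set.mem_iUnion] at hx1 hx2
      obtain ⟨c, hc, hxc⟩ := hx1
      obtain ⟨c', hc', hxc'⟩ := hx2
      rw [Set.mem_vadd_set_iff_neg_vadd_mem] at hxc hxc'
      set u := -rep c +ᵥ ((l : Fin n → ℝ) +ᵥ x) with hu_def
      set v := -rep c' +ᵥ ((l' : Fin n → ℝ) +ᵥ x) with hv_def
      have huv : u - v = ((l : Fin n → ℝ) - (l' : Fin n → ℝ)) - (rep c - rep c') := by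
        rw [hu_def, hv_def]
        funext i
        show (-rep c + ((l:Fin n → ℝ) + x)) i - (-rep c' + ((l':Fin n → ℝ) + x)) i
          = ((l:Fin n → ℝ) i - (l':Fin n → ℝ) i) - (rep c i - rep c' i)
        simp only [Pi.add_apply, Pi.neg_apply]
        ring
      have hll_latt : (l : Fin n → ℝ) - (l' : Fin n → ℝ) ∈ latt n :=
        latt_sub (hΛ_sub l.2) (hΛ_sub l'.2)
      have huv_latt : u - v ∈ latt n := by
        rw [huv]
        exact latt_sub hll_latt (latt_sub (hrep_latt c hc) (hrep_latt c' hc'))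
      have huv0 : u - v = 0 := by
        apply latt_eq_zero_of_abs_lt huv_latt
        intro i
        have h1 := hxc i (Set.mem_univ i)
        have h2 := hxc' i (Set.mem_univ i)
        simp only [Set.mem_Ico] at h1 h2
        have : (u - v) i = u i - v i := rfl
        rw [this, abs_lt]
        constructor <;> [skip; skip] <;>
          · have e1 : u i = (-rep c + ((l:Fin n → ℝ) + x)) i := rfl
            have e2 : v i = (-rep c' + ((l':Fin n → ℝ) + x)) i := rfl
            linarith [h1.1, h1.2, h2.1, h2.2]
      have hlleq : (l : Fin n → ℝ) - (l' : Fin n → ℝ) = rep c - rep c' := by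
        have := sub_eq_zero.mp huv0
        rw [huv] at huv0
        have := sub_eq_zero.mp huv0
        exact this
      by_cases hcc : c = c'
      · apply hll'
        subst hcc
        have : (l : Fin n → ℝ) - (l' : Fin n → ℝ) = 0 := by rw [hlleq]; abel
        have hl_eq : (l : Fin n → ℝ) = (l' : Fin n → ℝ) := sub_eq_zero.mp this
        exact Subtype.ext hl_eq
      · apply hcc
        have hmem : rep c - rep c' ∈ Λ := by
          rw [← hlleq]
          exact sub_mem l.2 l'.2
        have := (hq_iff (rep c) (rep c')).mpr hmem
        rw [(hrep c hc).2, (hrep c' hc').2] at this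
        exact this
    have h3 : ∑' (l : Λ), volume ((-(l : Fin n → ℝ) +ᵥ U) ∩ T) ≤ volume T := by
      rw [← measure_iUnion hg_disj
        (fun l => (measurableSet_vadd' hU_meas _).inter hT_meas)]
      exact measure_mono (Set.iUnion_subset fun l => Set.inter_subset_right)
    calc ((F.image q).card : ℝ≥0∞) = volume U := hU_vol.symm
      _ ≤ ∑' (l : Λ), volume (U ∩ ((l : Fin n → ℝ) +ᵥ T)) := h1
      _ = ∑' (l : Λ), volume ((-(l : Fin n → ℝ) +ᵥ U) ∩ T) := tsum_congr h2
      _ ≤ volume T := h3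
  -- combine
  have hcard : (K ∩ latt n).ncard = F.card := Set.ncard_eq_toFinset_card _ hS
  have key : ((K ∩ latt n).ncard : ℝ≥0∞) * volume T ≤ volume (K + T) * volume T := by
    rw [hcard]
    calc (F.card : ℝ≥0∞) * volume T
        = ∑ c ∈ F.image q, ((F.filter (fun z => q z = c)).card : ℝ≥0∞) * volume T := by
          rw [← Finset.sum_mul]
          congr 1
          rw [← Nat.cast_sum]
          congr 1
          exact Finset.card_eq_sum_card_image q F
      _ ≤ ∑ _c ∈ F.image q, volume (K + T) := Finset.sum_le_sum claimA
      _ = ((F.image q).card : ℝ≥0∞) * volume (K + T) := by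
          rw [Finset.sum_const, nsmul_eq_mul]
      _ ≤ volume T * volume (K + T) := mul_le_mul_left claimB _
      _ = volume (K + T) * volume T := mul_comm _ _
  have key2 : ((K ∩ latt n).ncard : ℝ≥0∞) ≤ volume (K + T) :=
    (ENNReal.mul_le_mul_iff_left hT_pos hT_fin).mp key
  have hKT_fin : volume (K + T) ≠ ⊤ := ((hK_cpt.add hT_cpt).measure_lt_top).ne
  have := ENNReal.toReal_mono hKT_fin key2
  simpa using this
end
end

section
/- For all k ≥ 0, (k+1)/4 ≥ ((k+2)/(2π)) · L_k(2)/L_{k+1}(2), where L_k(x) = ∑_{i=0}^k C(k,i) x^i/i!. Consequently, the function g(k) = 4^k / (k! · κ_k² · L_k(2)) is nonincreasing in k, where κ_k = π^{k/2}/Γ(k/2 + 1) is the volume of the k-dimensional Euclidean unit ball, given the estimate κ_k²/κ_{k+1}² ≤ (k+2)/(2π). -/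
noncomputable section

/-- The Laguerre polynomial (positive coefficients normalization) evaluated at 2. -/
def laguerreAtTwo (k : ℕ) : ℝ :=
  ∑ i ∈ Finset.range (k + 1), (k.choose i : ℝ) * 2 ^ i / (i.factorial : ℝ)

/-- The volume of the `k`-dimensional Euclidean unit ball, `κ_k = π^{k/2}/Γ(k/2+1)`. -/
def kappa (k : ℕ) : ℝ := Real.pi ^ ((k : ℝ) / 2) / Real.Gamma ((k : ℝ) / 2 + 1)

/-- The function `g(k) = 4^k / (k!·κ_k²·L_k(2))`. -/
def gfun (k : ℕ) : ℝ := 4 ^ k / ((k.factorial : ℝ) * kappa k ^ 2 * laguerreAtTwo k)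

lemma laguerreAtTwo_pos (k : ℕ) : 0 < laguerreAtTwo k := by
  unfold laguerreAtTwo
  apply Finset.sum_pos'
  · intro i _
    positivity
  · refine ⟨0, Finset.mem_range.mpr (Nat.succ_pos k), ?_⟩
    simp

lemma laguerreAtTwo_mono (k : ℕ) : laguerreAtTwo k ≤ laguerreAtTwo (k + 1) := by
  unfold laguerreAtTwo
  calc ∑ i ∈ Finset.range (k + 1), (k.choose i : ℝ) * 2 ^ i / (i.factorial : ℝ)
      ≤ ∑ i ∈ Finset.range (k + 1), ((k+1).choose i : ℝ) * 2 ^ i / (i.factorial : ℝ) := by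
        apply Finset.sum_le_sum
        intro i _
        have h : (k.choose i : ℝ) ≤ ((k+1).choose i : ℝ) := by
          exact_mod_cast Nat.choose_le_choose i (Nat.le_succ k)
        gcongr
    _ ≤ ∑ i ∈ Finset.range (k + 1 + 1), ((k+1).choose i : ℝ) * 2 ^ i / (i.factorial : ℝ) := by
        apply Finset.sum_le_sum_of_subset_of_nonneg
        · exact Finset.range_subset_range.mpr (by omega)
        · intro i _ _
          positivity

lemma kappa_pos (k : ℕ) : 0 < kappa k := by
  unfold kappa
  apply div_pos
  · exact Real.rpow_pos_of_pos Real.pi_pos _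
  · apply Real.Gamma_pos_of_pos
    positivity

/-- `(k+1)/4 ≥ ((k+2)/(2π))·L_k(2)/L_{k+1}(2)`; consequently, given the estimate
`κ_k²/κ_{k+1}² ≤ (k+2)/(2π)`, the function `g` is nonincreasing. -/
theorem laguerre_ratio_and_g_monotone :
    (∀ k : ℕ, ((k : ℝ) + 1) / 4 ≥
        (((k : ℝ) + 2) / (2 * Real.pi)) * (laguerreAtTwo k / laguerreAtTwo (k + 1))) ∧
      ((∀ k : ℕ, kappa k ^ 2 / kappa (k + 1) ^ 2 ≤ ((k : ℝ) + 2) / (2 * Real.pi)) →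
        ∀ k : ℕ, gfun (k + 1) ≤ gfun k) := by
  have pi3 := Real.pi_gt_three
  have pipos := Real.pi_pos
  have part1 : ∀ k : ℕ, ((k : ℝ) + 1) / 4 ≥
      (((k : ℝ) + 2) / (2 * Real.pi)) * (laguerreAtTwo k / laguerreAtTwo (k + 1)) := by
    intro k
    have hLk := laguerreAtTwo_pos k
    have hLk1 := laguerreAtTwo_pos (k + 1)
    have hratio : laguerreAtTwo k / laguerreAtTwo (k + 1) ≤ 1 :=
      (div_le_one hLk1).mpr (laguerreAtTwo_mono k)
    have hratio0 : 0 ≤ laguerreAtTwo k / laguerreAtTwo (k + 1) := by positivity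
    rcases Nat.eq_zero_or_pos k with hk | hk
    · subst hk
      have hL0 : laguerreAtTwo 0 = 1 := by
        unfold laguerreAtTwo; simp
      have hL1 : laguerreAtTwo 1 = 3 := by
        unfold laguerreAtTwo
        rw [Finset.sum_range_succ, Finset.sum_range_one]
        norm_num
      rw [hL0, hL1]
      rw [ge_iff_le, div_mul_eq_mul_div, div_le_div_iff₀ (by positivity) (by norm_num)]
      push_cast
      nlinarith
    · have hk1 : (1:ℝ) ≤ (k:ℝ) := by exact_mod_cast hk
      have key : ((k : ℝ) + 2) / (2 * Real.pi) ≤ ((k : ℝ) + 1) / 4 := by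
        rw [div_le_div_iff₀ (by positivity) (by norm_num)]
        nlinarith
      calc (((k : ℝ) + 2) / (2 * Real.pi)) * (laguerreAtTwo k / laguerreAtTwo (k + 1))
          ≤ (((k : ℝ) + 2) / (2 * Real.pi)) * 1 := by
            apply mul_le_mul_of_nonneg_left hratio (by positivity)
        _ = ((k : ℝ) + 2) / (2 * Real.pi) := by ring
        _ ≤ ((k : ℝ) + 1) / 4 := key
  refine ⟨part1, ?_⟩
  intro h k
  have hLk := laguerreAtTwo_pos k
  have hLk1 := laguerreAtTwo_pos (k + 1)
  have hκk := kappa_pos k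
  have hκk1 := kappa_pos (k + 1)
  have hfk : (0:ℝ) < (k.factorial : ℝ) := by positivity
  have hmono := laguerreAtTwo_mono k
  have hcomb : kappa k ^ 2 / kappa (k + 1) ^ 2 * (laguerreAtTwo k / laguerreAtTwo (k + 1))
      ≤ ((k : ℝ) + 1) / 4 := by
    calc kappa k ^ 2 / kappa (k + 1) ^ 2 * (laguerreAtTwo k / laguerreAtTwo (k + 1))
        ≤ (((k : ℝ) + 2) / (2 * Real.pi)) * (laguerreAtTwo k / laguerreAtTwo (k + 1)) := by
          apply mul_le_mul_of_nonneg_right (h k) (by positivity)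
      _ ≤ ((k : ℝ) + 1) / 4 := part1 k
  rw [div_mul_div_comm] at hcomb
  have hkey : kappa k ^ 2 * laguerreAtTwo k ≤
      ((k : ℝ) + 1) / 4 * (kappa (k + 1) ^ 2 * laguerreAtTwo (k + 1)) := by
    rw [div_le_iff₀ (by positivity)] at hcomb
    linarith
  unfold gfun
  rw [div_le_div_iff₀ (by positivity) (by positivity)]
  have hfact : ((k + 1).factorial : ℝ) = ((k : ℝ) + 1) * (k.factorial : ℝ) := by
    push_cast [Nat.factorial_succ]; ring
  rw [hfact]
  have h4 : (4:ℝ) ^ (k + 1) = 4 * 4 ^ k := by ring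
  rw [h4]
  nlinarith [mul_le_mul_of_nonneg_left hkey (le_of_lt hfk),
    pow_pos (show (0:ℝ) < 4 by norm_num) k]
end
end
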